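/- Let D ≥ 1 be an integer and let τ > 0, β ≥ 2, γ ∈ (0, 1/12], θ ∈ (0, 1/50) be reals. Let Δ_1, …, Δ_D be reals with s_j := βτ + Δ_j ≥ 0 for every j and ∑_{j=1}^{D} |Δ_j| ≤ γDτ. Let Good ⊆ {1,…,D} be a set of blocks with |{1,…,D} \ Good| ≤ θD, and let m_1, …, m_D be reals with 0 ≤ m_j ≤ s_j for every j (the number of mismatched positions in block j) such that m_j ≤ γ·s_j for every j ∈ Good. Then the overall mismatch fraction satisfies ∑_{j=1}^{D} m_j ≤ (γ + θ + γ/β)·∑_{j=1}^{D} s_j. -/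
import Mathlib


/-- **Boundary-oblivious sampling** (abstract form of Lemma 25): given `D`
consecutive blocks of sizes `sⱼ = βτ + Δⱼ ≥ 0` with `∑ⱼ |Δⱼ| ≤ γDτ`, where all
but at most `θD` blocks are good, and where on each good block the number of
mismatched positions `mⱼ` is at most `γ sⱼ` (while always `0 ≤ mⱼ ≤ sⱼ`), the
total mismatch is at most a `(γ + θ + γ/β)`-fraction of the total size. -/
theorem boundary_oblivious_sampling (D : ℕ) (hD : 1 ≤ D)
    (τ β γ θ : ℝ) (hτ : 0 < τ) (hβ : 2 ≤ β)
    (hγ0 : 0 < γ) (hγ1 : γ ≤ 1 / 12) (hθ0 : 0 < θ) (hθ1 : θ < 1 / 50)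
    (Δ m : Fin D → ℝ) (hpos : ∀ j, 0 ≤ β * τ + Δ j)
    (hdev : ∑ j, |Δ j| ≤ γ * D * τ)
    (Good : Finset (Fin D)) (hGood : ((Finset.univ \ Good).card : ℝ) ≤ θ * D)
    (hm0 : ∀ j, 0 ≤ m j) (hm1 : ∀ j, m j ≤ β * τ + Δ j)
    (hmGood : ∀ j ∈ Good, m j ≤ γ * (β * τ + Δ j)) :
    ∑ j, m j ≤ (γ + θ + γ / β) * ∑ j, (β * τ + Δ j) := by
  have hβ0 : (0:ℝ) < β := by linarith
  set bad : Finset (Fin D) := Finset.univ \ Good with hbaddef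
  set S : ℝ := ∑ j, (β * τ + Δ j) with hSdef
  set B : ℝ := ∑ j ∈ bad, (β * τ + Δ j) with hBdef
  have hsplit : ∀ f : Fin D → ℝ, ∑ j ∈ bad, f j + ∑ j ∈ Good, f j = ∑ j, f j :=
    fun f => Finset.sum_sdiff (Finset.subset_univ Good)
  -- bound on B
  have hB0 : 0 ≤ B := Finset.sum_nonneg fun j _ => hpos j
  have hB1 : B ≤ β * τ * (θ * D) + γ * D * τ := by
    have h1 : B ≤ ∑ j ∈ bad, (β * τ + |Δ j|) :=
      Finset.sum_le_sum fun j _ => by have := le_abs_self (Δ j); linarith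
    have h2 : ∑ j ∈ bad, (β * τ + |Δ j|) = (bad.card : ℝ) * (β * τ) + ∑ j ∈ bad, |Δ j| := by
      rw [Finset.sum_add_distrib, Finset.sum_const, nsmul_eq_mul]
    have h3 : ∑ j ∈ bad, |Δ j| ≤ γ * D * τ :=
      le_trans (Finset.sum_le_sum_of_subset_of_nonneg (Finset.subset_univ bad)
        fun j _ _ => abs_nonneg _) hdev
    have h4 : (bad.card : ℝ) * (β * τ) ≤ θ * D * (β * τ) :=
      mul_le_mul_of_nonneg_right hGood (by positivity)
    nlinarith
  -- lower bound on S
  have hSlow : (β - γ) * (D * τ) ≤ S := by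
    have h1 : ∑ j, (-|Δ j|) ≤ ∑ j, Δ j :=
      Finset.sum_le_sum fun j _ => neg_abs_le (Δ j)
    have h2 : ∑ j, (-|Δ j|) = -∑ j, |Δ j| := by rw [Finset.sum_neg_distrib]
    have h3 : S = (D : ℝ) * (β * τ) + ∑ j, Δ j := by
      rw [hSdef, Finset.sum_add_distrib, Finset.sum_const, nsmul_eq_mul,
        Finset.card_univ, Fintype.card_fin]
    nlinarith
  -- split the mismatch sum
  have hsum : ∑ j, m j ≤ γ * S + (1 - γ) * B := by
    have h1 : ∑ j ∈ Good, m j ≤ γ * ∑ j ∈ Good, (β * τ + Δ j) := by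
      rw [Finset.mul_sum]; exact Finset.sum_le_sum hmGood
    have h2 : ∑ j ∈ bad, m j ≤ B := Finset.sum_le_sum fun j _ => hm1 j
    have h3 : B + ∑ j ∈ Good, (β * τ + Δ j) = S := hsplit _
    have h4 : ∑ j ∈ bad, m j + ∑ j ∈ Good, m j = ∑ j, m j := hsplit m
    nlinarith
  -- final numeric combination
  have hc : γ / β * β = γ := div_mul_cancel₀ γ (ne_of_gt hβ0)
  have hcoef : 0 < θ + γ / β := by positivity
  have h5 : (θ + γ / β) * ((β - γ) * (D * τ)) ≤ (θ + γ / β) * S :=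
    mul_le_mul_of_nonneg_left hSlow hcoef.le
  have h6 : (1 - γ) * B ≤ (1 - γ) * (β * τ * (θ * D) + γ * D * τ) :=
    mul_le_mul_of_nonneg_left hB1 (by linarith)
  have h7 : (1 - γ) * (β * τ * (θ * D) + γ * D * τ) ≤ (θ + γ / β) * ((β - γ) * (D * τ)) := by
    have hDτ : (0:ℝ) < (D : ℝ) * τ := by
      have : (1:ℝ) ≤ (D : ℝ) := by exact_mod_cast hD
      nlinarith
    have he0 : 0 ≤ γ / β := by positivity
    have he1 : γ / β ≤ γ / 2 := by
      apply div_le_div_of_nonneg_left hγ0.le (by norm_num) hβ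
    nlinarith [mul_pos hγ0 hθ0, mul_pos hDτ hτ, sq_nonneg γ,
      mul_nonneg he0 hγ0.le, mul_nonneg (mul_nonneg hγ0.le hθ0.le) hDτ.le,
      mul_nonneg (mul_nonneg he0 hγ0.le) hDτ.le]
  linarith [hsum, h5, h6, h7]
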